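/- Let E be a real inner product space. Define Exp : {(q,ξ) ∈ E × E : ‖q‖ = 1, ⟨q,ξ⟩ = 0} → E by Exp(q,ξ) = cos(‖ξ‖) q + (sin(‖ξ‖)/‖ξ‖) ξ for ξ ≠ 0 and Exp(q,0) = q, and define R(q,ξ) = (Exp(q,−ξ/2), Exp(q,ξ/2)). Then R is a discretization map on the unit sphere: (1) both components of R(q,ξ) are unit vectors; (2) R(q,0) = (q,q); (3) for every unit vector q and every ξ with ⟨q,ξ⟩ = 0, the curve t ↦ Exp(q, tξ/2) − Exp(q, −tξ/2) is differentiable at t = 0 with derivative equal to ξ. -/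

import Mathlib

open scoped RealInnerProductSpace

open Classical in
/-- The exponential map of the round unit sphere:
`Exp(q,ξ) = cos(‖ξ‖) q + (sin(‖ξ‖)/‖ξ‖) ξ` for `ξ ≠ 0`, and `Exp(q,0) = q`. -/
noncomputable def sphereExp {E : Type*} [NormedAddCommGroup E]
    [InnerProductSpace ℝ E] (q ξ : E) : E :=
  if ξ = 0 then q
  else Real.cos ‖ξ‖ • q + (Real.sin ‖ξ‖ / ‖ξ‖) • ξ

lemma norm_sphereExp {E : Type*} [NormedAddCommGroup E]
    [InnerProductSpace ℝ E] (q ξ : E) (hq : ‖q‖ = 1) (ho : ⟪q, ξ⟫ = 0) :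
    ‖sphereExp q ξ‖ = 1 := by
  by_cases h : ξ = 0
  · simp [sphereExp, h, hq]
  · have hc : ‖ξ‖ ≠ 0 := norm_ne_zero_iff.mpr h
    rw [sphereExp, if_neg h]
    have hinner : ⟪Real.cos ‖ξ‖ • q, (Real.sin ‖ξ‖ / ‖ξ‖) • ξ⟫ = 0 := by
      rw [real_inner_smul_left, real_inner_smul_right, ho]; ring
    have h2 : ‖Real.cos ‖ξ‖ • q + (Real.sin ‖ξ‖ / ‖ξ‖) • ξ‖ ^ 2 = 1 := by
      rw [norm_add_sq_real, hinner, norm_smul, norm_smul, hq]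
      have : (Real.sin ‖ξ‖ / ‖ξ‖) ^ 2 * ‖ξ‖ ^ 2 = Real.sin ‖ξ‖ ^ 2 := by
        field_simp
      calc (‖Real.cos ‖ξ‖‖ * 1) ^ 2 + 2 * 0 + (‖Real.sin ‖ξ‖ / ‖ξ‖‖ * ‖ξ‖) ^ 2
          = Real.cos ‖ξ‖ ^ 2 + (Real.sin ‖ξ‖ / ‖ξ‖) ^ 2 * ‖ξ‖ ^ 2 := by
            simp only [mul_one, mul_pow, Real.norm_eq_abs, sq_abs]; ring
        _ = 1 := by rw [this, add_comm]; exact Real.sin_sq_add_cos_sq _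
    nlinarith [norm_nonneg (Real.cos ‖ξ‖ • q + (Real.sin ‖ξ‖ / ‖ξ‖) • ξ)]

theorem sphereExp_discretization_map {E : Type*} [NormedAddCommGroup E]
    [InnerProductSpace ℝ E] :
    ∀ q ξ : E, ‖q‖ = 1 → ⟪q, ξ⟫ = 0 →
      (‖sphereExp q (-((1 / 2 : ℝ) • ξ))‖ = 1 ∧
        ‖sphereExp q ((1 / 2 : ℝ) • ξ)‖ = 1) ∧
      (sphereExp q (-((1 / 2 : ℝ) • (0 : E))),
        sphereExp q ((1 / 2 : ℝ) • (0 : E))) = (q, q) ∧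
      HasDerivAt
        (fun t : ℝ => sphereExp q ((t / 2) • ξ) - sphereExp q (-((t / 2) • ξ)))
        ξ 0 := by
  intro q ξ hq ho
  refine ⟨⟨norm_sphereExp _ _ hq ?_, norm_sphereExp _ _ hq ?_⟩, ?_, ?_⟩
  · rw [inner_neg_right, real_inner_smul_right, ho]; ring
  · rw [real_inner_smul_right, ho]; ring
  · simp [sphereExp]
  · by_cases hz : ξ = 0
    · subst hz
      simpa using (hasDerivAt_const (0:ℝ) (0:E))
    · set c := ‖ξ‖ with hc
      have hc0 : c ≠ 0 := norm_ne_zero_iff.mpr hz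
      have hcpos : 0 < c := norm_pos_iff.mpr hz
      have key : (fun t : ℝ => sphereExp q ((t / 2) • ξ) - sphereExp q (-((t / 2) • ξ)))
          = fun t : ℝ => ((2 / c) * Real.sin (t * c / 2)) • ξ := by
        funext t
        by_cases ht : t = 0
        · simp [ht, sphereExp]
        · have hη : (t / 2) • ξ ≠ 0 := by
            simp [smul_eq_zero, ht, hz]
          have hη' : -((t / 2) • ξ) ≠ 0 := neg_ne_zero.mpr hη
          have hn : ‖(t / 2) • ξ‖ = |t| * c / 2 := by
            rw [norm_smul, Real.norm_eq_abs, abs_div]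
            simp [abs_two]; ring
          rw [sphereExp, sphereExp, if_neg hη, if_neg hη', norm_neg, hn]
          rw [smul_neg]
          have : Real.cos (|t| * c / 2) • q + (Real.sin (|t| * c / 2) / (|t| * c / 2)) • (t / 2) • ξ -
              (Real.cos (|t| * c / 2) • q + -((Real.sin (|t| * c / 2) / (|t| * c / 2)) • (t / 2) • ξ))
              = (2 * (Real.sin (|t| * c / 2) / (|t| * c / 2)) * (t / 2)) • ξ := by
            rw [smul_smul]
            module
          rw [this]
          congr 1
          rcases lt_or_gt_of_ne ht with h | h
          · rw [abs_of_neg h]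
            have : Real.sin (-t * c / 2) = - Real.sin (t * c / 2) := by
              rw [show -t * c / 2 = -(t * c / 2) by ring, Real.sin_neg]
            rw [this]
            field_simp
          · rw [abs_of_pos h]
            field_simp
      rw [key]
      have h1 : HasDerivAt (fun t : ℝ => (2 / c) * Real.sin (t * c / 2)) 1 0 := by
        have hs : HasDerivAt (fun t : ℝ => Real.sin (t * c / 2)) (c / 2) 0 := by
          have := (Real.hasDerivAt_sin ((0:ℝ) * c / 2)).comp 0
            ((hasDerivAt_id (0:ℝ)).mul_const c |>.div_const 2)
          simpa [Function.comp_def] using this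
        have := hs.const_mul (2 / c)
        rw [show (2 / c * (c / 2)) = (1:ℝ) by field_simp] at this
        exact this
      have := h1.smul_const ξ
      simpa using this
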